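/- Suppose X is partitioned into pairwise disjoint sets H̃, L̃, Ũ with H̃ ∪ L̃ ∪ Ũ = X such that pH(x) = r^max(x) for all x ∈ H̃, pL(x) = r^max(x) for all x ∈ L̃, pU(x) = r^max(x) for all x ∈ Ũ, and H̃ is nonempty. Then with probability at least 1 − Σ_{x ∈ X} r^min(x) over ω (i.e. on an event of μ-measure at least this bound), the following holds: for every pred : X → Bool with pred x = true for all x ∈ H̃ and pred x = false for all x ∈ L̃, the F-score satisfies 2·TP / (2·TP + FP + FN) ≥ 2·|H̃| / (2·|H̃| + |Ũ|). -/

import Mathlib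

open MeasureTheory

private lemma fdiv_aux (h u t f : ℝ) (h1 : 1 ≤ h) (hht : h ≤ t) (hf0 : 0 ≤ f)
    (hfu : f ≤ u) : 2*h/(2*h+u) ≤ 2*t/(2*t+f) := by
  have hu0 : (0:ℝ) ≤ u := le_trans hf0 hfu
  have d1 : (0:ℝ) < 2*h+u := by linarith
  have d2 : (0:ℝ) < 2*t+f := by linarith
  rw [div_le_div_iff₀ d1 d2]
  nlinarith

theorem stmt_6
    {Ω : Type*} [MeasurableSpace Ω] (μ : Measure Ω) [IsProbabilityMeasure μ]
    {X : Type*} [Fintype X] [DecidableEq X]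
    (θ ε : ℝ) (hε : 0 < ε)
    (F : X → Ω → ℝ) (hF : ∀ x, Measurable (F x))
    (pH pL pU rmin rmax : X → ℝ)
    (hpH : ∀ x, pH x = (μ {ω | θ < F x ω}).toReal)
    (hpL : ∀ x, pL x = (μ {ω | F x ω ≤ θ}).toReal)
    (hpU : ∀ x, pU x = (μ {ω | θ - ε / 2 < F x ω ∧ F x ω ≤ θ + ε / 2}).toReal)
    (hrmin : ∀ x, rmin x = min (pH x) (min (pL x) (1 - pU x)))
    (hrmax : ∀ x, rmax x = max (pH x) (max (pL x) (pU x)))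
    (H L U : Finset X)
    (hHL : Disjoint H L) (hHU : Disjoint H U) (hLU : Disjoint L U)
    (hunion : H ∪ L ∪ U = Finset.univ)
    (hH : ∀ x ∈ H, pH x = rmax x)
    (hL : ∀ x ∈ L, pL x = rmax x)
    (hU : ∀ x ∈ U, pU x = rmax x)
    (hne : H.Nonempty) :
    1 - ∑ x, rmin x ≤
      (μ {ω | ∀ pred : X → Bool,
          (∀ x ∈ H, pred x = true) → (∀ x ∈ L, pred x = false) →
          2 * (H.card : ℝ) / (2 * (H.card : ℝ) + (U.card : ℝ)) ≤ 2 * (({x | pred x = true ∧ θ < F x ω}.ncard : ℝ)) / (2 * (({x | pred x = true ∧ θ < F x ω}.ncard : ℝ)) + (({x | pred x = true ∧ F x ω ≤ θ}.ncard : ℝ)) + (({x | pred x = false ∧ θ < F x ω}.ncard : ℝ)))}).toReal := by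
  classical
  set S : Set Ω := {ω | ∀ pred : X → Bool,
          (∀ x ∈ H, pred x = true) → (∀ x ∈ L, pred x = false) →
          2 * (H.card : ℝ) / (2 * (H.card : ℝ) + (U.card : ℝ)) ≤ 2 * (({x | pred x = true ∧ θ < F x ω}.ncard : ℝ)) / (2 * (({x | pred x = true ∧ θ < F x ω}.ncard : ℝ)) + (({x | pred x = true ∧ F x ω ≤ θ}.ncard : ℝ)) + (({x | pred x = false ∧ θ < F x ω}.ncard : ℝ)))} with hS
  -- basic facts
  have hmemU : ∀ x : X, x ∉ H → x ∉ L → x ∈ U := by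
    intro x hx hl
    have : x ∈ H ∪ L ∪ U := by rw [hunion]; exact Finset.mem_univ x
    simp [Finset.mem_union, hx, hl] at this
    exact this
  have hsumHL : ∀ x, pH x + pL x = 1 := by
    intro x
    have hms : MeasurableSet {ω | θ < F x ω} := measurableSet_lt measurable_const (hF x)
    have hcompl : {ω | F x ω ≤ θ} = {ω | θ < F x ω}ᶜ := by
      ext ω; simp [not_lt]
    rw [hpH, hpL, hcompl, prob_compl_eq_one_sub hms,
      ENNReal.toReal_sub_of_le prob_le_one ENNReal.one_ne_top]
    simp
  have hnn : ∀ x, 0 ≤ pH x ∧ 0 ≤ pL x ∧ pU x ≤ 1 := by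
    intro x
    refine ⟨by rw [hpH]; exact ENNReal.toReal_nonneg,
      by rw [hpL]; exact ENNReal.toReal_nonneg, ?_⟩
    rw [hpU]
    exact ENNReal.toReal_le_of_le_ofReal one_pos.le (by simpa using prob_le_one)
  -- the good event
  set E : X → Set Ω := fun x =>
    if x ∈ H then {ω | θ < F x ω} else if x ∈ L then {ω | F x ω ≤ θ} else Set.univ with hE
  set A : Set Ω := ⋂ x, E x with hA
  have hAmeas : MeasurableSet A := by
    apply MeasurableSet.iInter
    intro x
    by_cases hx : x ∈ H
    · simp only [hE, if_pos hx]; exact measurableSet_lt measurable_const (hF x)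
    · by_cases hl : x ∈ L
      · simp only [hE, if_neg hx, if_pos hl]
        exact measurableSet_le (hF x) measurable_const
      · simp only [hE, if_neg hx, if_neg hl]; exact MeasurableSet.univ
  -- A ⊆ S
  have hAS : A ⊆ S := by
    intro ω hω pred hpH' hpL'
    simp only [hA, Set.mem_iInter] at hω
    have hHgt : ∀ x ∈ H, θ < F x ω := by
      intro x hx
      have := hω x
      simpa only [hE, if_pos hx, Set.mem_setOf_eq] using this
    have hLle : ∀ x ∈ L, F x ω ≤ θ := by
      intro x hx
      have hxH : x ∉ H := fun h => (Finset.disjoint_left.mp hHL h) hx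
      have := hω x
      simpa only [hE, if_neg hxH, if_pos hx, Set.mem_setOf_eq] using this
    set T : Set X := {x | pred x = true ∧ θ < F x ω} with hT
    set FPs : Set X := {x | pred x = true ∧ F x ω ≤ θ} with hFPs
    set FNs : Set X := {x | pred x = false ∧ θ < F x ω} with hFNs
    have hHT : (↑H : Set X) ⊆ T := by
      intro x hx
      have hx' : x ∈ H := hx
      exact ⟨hpH' x hx', hHgt x hx'⟩
    have hht : (H.card : ℝ) ≤ (T.ncard : ℝ) := by
      have : H.card ≤ T.ncard := by
        rw [← Set.ncard_coe_finset]
        exact Set.ncard_le_ncard hHT (Set.toFinite T)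
      exact_mod_cast this
    have hFU : FPs ∪ FNs ⊆ (↑U : Set X) := by
      rintro x (⟨hp, hle⟩ | ⟨hp, hgt⟩)
      · have hxH : x ∉ H := fun h => absurd (hHgt x h) (not_lt.mpr hle)
        have hxL : x ∉ L := fun h => by simp [hpL' x h] at hp
        exact hmemU x hxH hxL
      · have hxH : x ∉ H := fun h => by simp [hpH' x h] at hp
        have hxL : x ∉ L := fun h => absurd hgt (not_lt.mpr (hLle x h))
        exact hmemU x hxH hxL
    have hdisj : Disjoint FPs FNs := by
      rw [Set.disjoint_left]
      rintro x ⟨hp, _⟩ ⟨hp', _⟩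
      simp [hp] at hp'
    have hfu : (FPs.ncard : ℝ) + (FNs.ncard : ℝ) ≤ (U.card : ℝ) := by
      have h1 : FPs.ncard + FNs.ncard = (FPs ∪ FNs).ncard :=
        (Set.ncard_union_eq hdisj (Set.toFinite _) (Set.toFinite _)).symm
      have h2 : (FPs ∪ FNs).ncard ≤ U.card := by
        rw [← Set.ncard_coe_finset]
        exact Set.ncard_le_ncard hFU (Set.toFinite _)
      have := h1.trans_le h2
      exact_mod_cast this
    have h1 : (1:ℝ) ≤ (H.card : ℝ) := by
      have := Finset.card_pos.mpr hne
      exact_mod_cast this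
    have key := fdiv_aux (H.card : ℝ) (U.card : ℝ) (T.ncard : ℝ)
      ((FPs.ncard : ℝ) + (FNs.ncard : ℝ)) h1 hht
      (by positivity) hfu
    calc 2 * (H.card : ℝ) / (2 * (H.card : ℝ) + (U.card : ℝ))
        ≤ 2 * (T.ncard : ℝ) / (2 * (T.ncard : ℝ) + ((FPs.ncard : ℝ) + (FNs.ncard : ℝ))) := key
      _ = 2 * (T.ncard : ℝ) / (2 * (T.ncard : ℝ) + (FPs.ncard : ℝ) + (FNs.ncard : ℝ)) := by
          ring_nf
  -- measure bound on complement
  have hterm : ∀ x : X, (μ (E x)ᶜ).toReal ≤ rmin x := by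
    intro x
    obtain ⟨hpH0, hpL0, hpU1⟩ := hnn x
    by_cases hx : x ∈ H
    · have hEc : (E x)ᶜ = {ω | F x ω ≤ θ} := by
        simp only [hE, if_pos hx]
        ext ω; simp [not_lt]
      have hval : (μ (E x)ᶜ).toReal = pL x := by rw [hEc, hpL]
      rw [hval, hrmin]
      have hmax := hH x hx
      rw [hrmax] at hmax
      have h1 : pL x ≤ pH x := by rw [hmax]; exact le_max_of_le_right (le_max_left _ _)
      have h2 : pU x ≤ pH x := by rw [hmax]; exact le_max_of_le_right (le_max_right _ _)
      have h3 : pL x ≤ 1 - pU x := by have := hsumHL x; linarith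
      exact le_min h1 (le_min le_rfl h3)
    · by_cases hl : x ∈ L
      · have hEc : (E x)ᶜ = {ω | θ < F x ω} := by
          simp only [hE, if_neg hx, if_pos hl]
          ext ω; simp [not_le]
        have hval : (μ (E x)ᶜ).toReal = pH x := by rw [hEc, hpH]
        rw [hval, hrmin]
        have hmax := hL x hl
        rw [hrmax] at hmax
        have h1 : pH x ≤ pL x := by rw [hmax]; exact le_max_left _ _
        have h2 : pU x ≤ pL x := by rw [hmax]; exact le_max_of_le_right (le_max_right _ _)
        have h3 : pH x ≤ 1 - pU x := by have := hsumHL x; linarith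
        exact le_min le_rfl (le_min h1 h3)
      · have hEc : (E x)ᶜ = (∅ : Set Ω) := by
          simp [hE, if_neg hx, if_neg hl]
        rw [hEc]
        simp only [measure_empty, ENNReal.toReal_zero]
        rw [hrmin]
        exact le_min hpH0 (le_min hpL0 (by linarith))
  have hcomplA : (μ Aᶜ).toReal ≤ ∑ x, rmin x := by
    have hUnion : Aᶜ = ⋃ x, (E x)ᶜ := by
      rw [hA, Set.compl_iInter]
    have hle : μ Aᶜ ≤ ∑ x, μ (E x)ᶜ := by
      rw [hUnion]
      exact (measure_iUnion_le _).trans_eq (tsum_fintype _)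
    have hfin : (∑ x, μ (E x)ᶜ) ≠ ⊤ :=
      ENNReal.sum_ne_top.mpr fun x _ => measure_ne_top μ _
    calc (μ Aᶜ).toReal ≤ (∑ x, μ (E x)ᶜ).toReal := ENNReal.toReal_mono hfin hle
      _ = ∑ x, (μ (E x)ᶜ).toReal := ENNReal.toReal_sum fun x _ => measure_ne_top μ _
      _ ≤ ∑ x, rmin x := Finset.sum_le_sum fun x _ => hterm x
  have hAval : (μ A).toReal = 1 - (μ Aᶜ).toReal := by
    rw [prob_compl_eq_one_sub hAmeas,
      ENNReal.toReal_sub_of_le prob_le_one ENNReal.one_ne_top]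
    simp
  have hAS' : (μ A).toReal ≤ (μ S).toReal :=
    ENNReal.toReal_mono (measure_ne_top μ _) (measure_mono hAS)
  linarith
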